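/- Let Γ ∈ ℝ^{d×d} be symmetric positive definite, let D ∈ ℝ^{d×k} and let M ∈ ℝ^{d×d} be symmetric. Consider the scalar function F(V) := Tr[ Dᵀ P_V M P_V D ] defined on the open set of matrices V ∈ ℝ^{d×s} with VᵀΓV invertible, where P_V := Γ⁻¹ − V(VᵀΓV)⁻¹Vᵀ. Then F is Fréchet differentiable and its Euclidean gradient (the matrix G with D_V F[H] = Tr[GᵀH] for all H) is G = −4 Γ P_V Sym(D Dᵀ P_V M) V (VᵀΓV)⁻¹, where Sym(W) := (W + Wᵀ)/2. -/

import Mathlib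

open Matrix

attribute [local instance] Matrix.normedAddCommGroup Matrix.normedSpace

open Asymptotics

abbrev Mat (m n : ℕ) := Matrix (Fin m) (Fin n) ℝ

/-- bundle a linear map as a CLM on finite dimensional spaces -/
noncomputable def clm {E F : Type*} [NormedAddCommGroup E] [NormedSpace ℝ E]
    [FiniteDimensional ℝ E] [NormedAddCommGroup F] [NormedSpace ℝ F]
    (f : E → F) (h1 : ∀ x y, f (x + y) = f x + f y) (h2 : ∀ (c : ℝ) x, f (c • x) = c • f x) :
    E →L[ℝ] F :=
  LinearMap.toContinuousLinearMap { toFun := f, map_add' := h1, map_smul' := h2 }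

@[simp] lemma clm_apply {E F : Type*} [NormedAddCommGroup E] [NormedSpace ℝ E]
    [FiniteDimensional ℝ E] [NormedAddCommGroup F] [NormedSpace ℝ F]
    (f : E → F) (h1) (h2) (x : E) : clm f h1 h2 x = f x := rfl

noncomputable def mulCLM (m n p : ℕ) : Mat m n →L[ℝ] Mat n p →L[ℝ] Mat m p :=
  clm (fun A => clm (fun B => A * B) (fun _ _ => Matrix.mul_add _ _ _)
      (fun _ _ => Matrix.mul_smul _ _ _))
    (by intro x y; ext B : 1; simp [Matrix.add_mul])
    (by intro c x; ext B : 1; simp [Matrix.smul_mul])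

lemma mulBB (m n p : ℕ) :
    IsBoundedBilinearMap ℝ (fun q : Mat m n × Mat n p => q.1 * q.2) := by
  have := (mulCLM m n p).isBoundedBilinearMap
  simpa [mulCLM] using this

lemma HasFDerivAt.matMul {E : Type*} [NormedAddCommGroup E] [NormedSpace ℝ E]
    {m n p : ℕ} {f : E → Mat m n} {g : E → Mat n p}
    {f' : E →L[ℝ] Mat m n} {g' : E →L[ℝ] Mat n p} {x : E}
    (hf : HasFDerivAt f f' x) (hg : HasFDerivAt g g' x) :
    HasFDerivAt (fun y => f y * g y)
      (((mulBB m n p).deriv (f x, g x)).comp (f'.prod g')) x :=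
  HasFDerivAt.comp (g := fun q : Mat m n × Mat n p => q.1 * q.2) x
    ((mulBB m n p).hasFDerivAt (f x, g x)) (hf.prodMk hg)

lemma hasFDerivAt_matrix_inv {s : ℕ} (A : Mat s s) (hA : IsUnit A) :
    HasFDerivAt (fun B : Mat s s => B⁻¹)
      (clm (fun H : Mat s s => -(A⁻¹ * H * A⁻¹))
        (by intro x y; noncomm_ring)
        (by intro c x; simp [Matrix.mul_smul, Matrix.smul_mul])) A := by
  have hdet : IsUnit A.det := (Matrix.isUnit_iff_isUnit_det A).mp hA
  have hdet0 : A.det ≠ 0 := hdet.ne_zero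
  have hcont : ContinuousAt Inv.inv A := by
    refine continuousAt_matrix_inv A ?_
    rw [Ring.inverse_eq_inv']
    exact continuousAt_inv₀ hdet0
  have hev : ∀ᶠ B in nhds A, IsUnit (B : Mat s s).det := by
    have hc : ContinuousAt (fun B : Mat s s => B.det) A :=
      (Continuous.matrix_det continuous_id).continuousAt
    have : ∀ᶠ B in nhds A, (B : Mat s s).det ≠ 0 := hc.eventually_ne hdet0
    filter_upwards [this] with B hB using isUnit_iff_ne_zero.mpr hB
  refine HasFDerivAt.of_isLittleO ?_
  simp only [clm_apply]
  have key : ∀ᶠ B in nhds A,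
      B⁻¹ - A⁻¹ - (-(A⁻¹ * (B - A) * A⁻¹))
        = (A⁻¹ - B⁻¹) * ((B - A) * A⁻¹) := by
    filter_upwards [hev] with B hB
    have h1 : B * B⁻¹ = 1 := Matrix.mul_nonsing_inv B hB
    have h2 : B⁻¹ * B = 1 := Matrix.nonsing_inv_mul B hB
    have h3 : A * A⁻¹ = 1 := Matrix.mul_nonsing_inv A hdet
    have h4 : A⁻¹ * A = 1 := Matrix.nonsing_inv_mul A hdet
    have e1 : B⁻¹ - A⁻¹ = B⁻¹ * (A - B) * A⁻¹ := by
      have e2 : B⁻¹ * (A - B) * A⁻¹ = B⁻¹ * (A * A⁻¹) - B⁻¹ * B * A⁻¹ := by noncomm_ring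
      rw [e2, h3, h2, Matrix.mul_one, Matrix.one_mul]
    rw [e1]
    have e3 : (A⁻¹ - B⁻¹) * ((B - A) * A⁻¹) = A⁻¹ * B * A⁻¹ - A⁻¹ * (A * A⁻¹)
        - (B⁻¹ * B * A⁻¹ - B⁻¹ * A * A⁻¹) := by noncomm_ring
    rw [e3]
    simp only [Matrix.sub_mul, Matrix.mul_sub, ← Matrix.mul_assoc, h2, h3, h4,
      Matrix.one_mul, Matrix.mul_one]
    abel
  have keyE : (fun B : Mat s s => B⁻¹ - A⁻¹ - -(A⁻¹ * (B - A) * A⁻¹)) =ᶠ[nhds A]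
      fun B => (A⁻¹ - B⁻¹) * ((B - A) * A⁻¹) := key
  refine Asymptotics.IsLittleO.congr' ?_ keyE.symm (Filter.EventuallyEq.refl _ _)
  have hO : (fun B : Mat s s => (A⁻¹ - B⁻¹) * ((B - A) * A⁻¹))
      =O[nhds A] fun B => ‖A⁻¹ - B⁻¹‖ * ‖(B - A) * A⁻¹‖ :=
    (mulBB s s s).isBigO_comp
  refine hO.trans_isLittleO ?_
  have ho1 : (fun B : Mat s s => ‖A⁻¹ - B⁻¹‖) =o[nhds A] (fun _ => (1 : ℝ)) := by
    rw [Asymptotics.isLittleO_one_iff]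
    have : Filter.Tendsto (fun B : Mat s s => A⁻¹ - B⁻¹) (nhds A) (nhds (A⁻¹ - A⁻¹)) :=
      Filter.Tendsto.sub tendsto_const_nhds hcont.tendsto
    simpa using this.norm
  have hO2 : (fun B : Mat s s => ‖(B - A) * A⁻¹‖) =O[nhds A] fun B => ‖B - A‖ := by
    have h5 : (fun B : Mat s s => (B - A) * A⁻¹) =O[nhds A] fun B => B - A :=
      ((mulCLM s s s).flip A⁻¹).isBigO_comp (fun B => B - A) (nhds A)
    simpa using h5.norm_norm
  have scal := ho1.mul_isBigO hO2
  simp only [one_mul] at scal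
  exact Asymptotics.isLittleO_norm_right.mp scal

theorem key {d k s : ℕ} (Γ M : Mat d d) (D : Mat d k) (V H : Mat d s)
    (hGt : Γᵀ = Γ) (hM : Mᵀ = M) (hΓ : IsUnit Γ.det) (hVs : IsUnit (Vᵀ * Γ * V)) :
    ((Dᵀ * (Γ⁻¹ - V * (Vᵀ * Γ * V)⁻¹ * Vᵀ) * M *
        -(V * (Vᵀ * Γ * V)⁻¹ * Hᵀ +
            (V * -((Vᵀ * Γ * V)⁻¹ * (Vᵀ * Γ * H + Hᵀ * Γ * V) * (Vᵀ * Γ * V)⁻¹) +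
              H * (Vᵀ * Γ * V)⁻¹) * Vᵀ) +
      Dᵀ *
            -(V * (Vᵀ * Γ * V)⁻¹ * Hᵀ +
                (V * -((Vᵀ * Γ * V)⁻¹ * (Vᵀ * Γ * H + Hᵀ * Γ * V) * (Vᵀ * Γ * V)⁻¹) +
                  H * (Vᵀ * Γ * V)⁻¹) * Vᵀ) *
          M * (Γ⁻¹ - V * (Vᵀ * Γ * V)⁻¹ * Vᵀ)) * D).trace =
    (((-4 : ℝ) • (Γ * (Γ⁻¹ - V * (Vᵀ * Γ * V)⁻¹ * Vᵀ) *
        ((1 / 2 : ℝ) • (D * Dᵀ * (Γ⁻¹ - V * (Vᵀ * Γ * V)⁻¹ * Vᵀ) * M +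
          (D * Dᵀ * (Γ⁻¹ - V * (Vᵀ * Γ * V)⁻¹ * Vᵀ) * M)ᵀ)) * V *
        (Vᵀ * Γ * V)⁻¹))ᵀ * H).trace := by
  have hVdet : IsUnit (Vᵀ * Γ * V).det := (Matrix.isUnit_iff_isUnit_det _).mp hVs
  set N : Mat s s := (Vᵀ * Γ * V)⁻¹ with hNdef
  set P : Mat d d := Γ⁻¹ - V * N * Vᵀ with hPdef
  have hNt : Nᵀ = N := by
    rw [hNdef, Matrix.transpose_nonsing_inv]
    congr 1
    simp [Matrix.transpose_mul, hGt, Matrix.mul_assoc]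
  have hGit : (Γ⁻¹)ᵀ = Γ⁻¹ := by
    rw [Matrix.transpose_nonsing_inv, hGt]
  have hPt : Pᵀ = P := by
    rw [hPdef]
    simp [Matrix.transpose_sub, Matrix.transpose_mul, hNt, hGit, Matrix.mul_assoc]
  have hPG : P * Γ = 1 - V * N * (Vᵀ * Γ) := by
    rw [hPdef, Matrix.sub_mul, Matrix.nonsing_inv_mul Γ hΓ, Matrix.mul_assoc]
  set Z : Mat d d := D * Dᵀ * P * M + M * P * (D * Dᵀ) with hZdef
  have hZt : Zᵀ = Z := by
    rw [hZdef]
    simp only [Matrix.transpose_add, Matrix.transpose_mul, Matrix.transpose_transpose,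
      hM, hPt]
    rw [add_comm]
    congr 1 <;> noncomm_ring
  set Q : Mat d d := -(V * N * Hᵀ +
      (V * -(N * (Vᵀ * Γ * H + Hᵀ * Γ * V) * N) + H * N) * Vᵀ) with hQdef
  have hQ : Q = -(V * N * Hᵀ) - H * N * Vᵀ + V * N * (Vᵀ * Γ) * H * N * Vᵀ
      + V * N * Hᵀ * (Γ * V) * N * Vᵀ := by
    rw [hQdef]
    simp only [Matrix.mul_add, Matrix.add_mul, Matrix.mul_neg, Matrix.neg_mul,
      Matrix.mul_assoc, neg_add]
    abel
  have hPGH : ∀ X : Mat d s, P * (Γ * X) = X - V * (N * (Vᵀ * (Γ * X))) := by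
    intro X
    have := hPG
    calc P * (Γ * X) = (P * Γ) * X := by rw [Matrix.mul_assoc]
    _ = (1 - V * N * (Vᵀ * Γ)) * X := by rw [hPG]
    _ = X - V * (N * (Vᵀ * (Γ * X))) := by
        rw [Matrix.sub_mul, Matrix.one_mul]
        simp [Matrix.mul_assoc]
  simp only [Matrix.mul_add, Matrix.add_mul, Matrix.mul_sub, Matrix.sub_mul,
    Matrix.mul_neg, Matrix.neg_mul, Matrix.mul_one, Matrix.one_mul,
    Matrix.transpose_mul, Matrix.transpose_add, Matrix.transpose_sub, Matrix.transpose_smul,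
    Matrix.transpose_transpose, hM, hGt, hGit, hNt,
    smul_mul_assoc, mul_smul_comm,
    Matrix.trace_add, Matrix.trace_sub, Matrix.trace_neg, Matrix.trace_smul,
    Matrix.mul_assoc, hPGH, smul_smul, neg_neg, smul_add, smul_sub, smul_neg]
  simp only [hPt]
  simp only [Matrix.mul_smul, Matrix.smul_mul, smul_smul]
  rw [hQ]
  simp only [Matrix.mul_assoc]
  simp only [hPGH]
  simp only [Matrix.mul_add, Matrix.add_mul, Matrix.mul_sub, Matrix.sub_mul, Matrix.mul_neg,
    Matrix.neg_mul, Matrix.trace_add, Matrix.trace_sub, Matrix.trace_neg, Matrix.mul_assoc]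
  have cL1 : (Dᵀ * (P * (M * (V * (N * (Hᵀ * D)))))).trace
      = (N * (Vᵀ * (M * (P * (D * (Dᵀ * H)))))).trace := by
    rw [← Matrix.trace_transpose (Dᵀ * (P * (M * (V * (N * (Hᵀ * D))))))]
    rw [show (Dᵀ * (P * (M * (V * (N * (Hᵀ * D))))))ᵀ
        = (Dᵀ * H) * (N * (Vᵀ * (M * (P * D)))) from by
      simp only [Matrix.transpose_mul, Matrix.transpose_transpose, hPt, hNt, hM,
        Matrix.mul_assoc]]
    rw [Matrix.trace_mul_comm]
    simp only [Matrix.mul_assoc]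
  have cL2 : (Dᵀ * (P * (M * (H * (N * (Vᵀ * D)))))).trace
      = (N * (Vᵀ * (D * (Dᵀ * (P * (M * H)))))).trace := by
    rw [show Dᵀ * (P * (M * (H * (N * (Vᵀ * D)))))
        = (Dᵀ * (P * (M * H))) * (N * (Vᵀ * D)) from by simp only [Matrix.mul_assoc]]
    rw [Matrix.trace_mul_comm]
    simp only [Matrix.mul_assoc]
  have cL3 : (Dᵀ * (P * (M * (V * (N * (Vᵀ * (Γ * (H * (N * (Vᵀ * D)))))))))).trace
      = (N * (Vᵀ * (D * (Dᵀ * (P * (M * (V * (N * (Vᵀ * (Γ * H)))))))))).trace := by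
    rw [show Dᵀ * (P * (M * (V * (N * (Vᵀ * (Γ * (H * (N * (Vᵀ * D)))))))))
        = (Dᵀ * (P * (M * (V * (N * (Vᵀ * (Γ * H))))))) * (N * (Vᵀ * D)) from by
      simp only [Matrix.mul_assoc]]
    rw [Matrix.trace_mul_comm]
    simp only [Matrix.mul_assoc]
  have cL4 : (Dᵀ * (P * (M * (V * (N * (Hᵀ * (Γ * (V * (N * (Vᵀ * D)))))))))).trace
      = (N * (Vᵀ * (M * (P * (D * (Dᵀ * (V * (N * (Vᵀ * (Γ * H)))))))))).trace := by
    rw [← Matrix.trace_transpose (Dᵀ * (P * (M * (V * (N * (Hᵀ * (Γ * (V * (N * (Vᵀ * D))))))))))]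
    rw [show (Dᵀ * (P * (M * (V * (N * (Hᵀ * (Γ * (V * (N * (Vᵀ * D))))))))))ᵀ
        = (Dᵀ * (V * (N * (Vᵀ * (Γ * H))))) * (N * (Vᵀ * (M * (P * D)))) from by
      simp only [Matrix.transpose_mul, Matrix.transpose_transpose, hPt, hNt, hM, hGt,
        Matrix.mul_assoc]]
    rw [Matrix.trace_mul_comm]
    simp only [Matrix.mul_assoc]
  have cL5 : (Dᵀ * (V * (N * (Hᵀ * (M * (P * D)))))).trace
      = (N * (Vᵀ * (D * (Dᵀ * (P * (M * H)))))).trace := by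
    rw [← Matrix.trace_transpose (Dᵀ * (V * (N * (Hᵀ * (M * (P * D))))))]
    rw [show (Dᵀ * (V * (N * (Hᵀ * (M * (P * D))))))ᵀ
        = (Dᵀ * (P * (M * H))) * (N * (Vᵀ * D)) from by
      simp only [Matrix.transpose_mul, Matrix.transpose_transpose, hPt, hNt, hM,
        Matrix.mul_assoc]]
    rw [Matrix.trace_mul_comm]
    simp only [Matrix.mul_assoc]
  have cL6 : (Dᵀ * (H * (N * (Vᵀ * (M * (P * D)))))).trace
      = (N * (Vᵀ * (M * (P * (D * (Dᵀ * H)))))).trace := by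
    rw [show Dᵀ * (H * (N * (Vᵀ * (M * (P * D)))))
        = (Dᵀ * H) * (N * (Vᵀ * (M * (P * D)))) from by simp only [Matrix.mul_assoc]]
    rw [Matrix.trace_mul_comm]
    simp only [Matrix.mul_assoc]
  have cL7 : (Dᵀ * (V * (N * (Vᵀ * (Γ * (H * (N * (Vᵀ * (M * (P * D)))))))))).trace
      = (N * (Vᵀ * (M * (P * (D * (Dᵀ * (V * (N * (Vᵀ * (Γ * H)))))))))).trace := by
    rw [show Dᵀ * (V * (N * (Vᵀ * (Γ * (H * (N * (Vᵀ * (M * (P * D)))))))))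
        = (Dᵀ * (V * (N * (Vᵀ * (Γ * H))))) * (N * (Vᵀ * (M * (P * D)))) from by
      simp only [Matrix.mul_assoc]]
    rw [Matrix.trace_mul_comm]
    simp only [Matrix.mul_assoc]
  have cL8 : (Dᵀ * (V * (N * (Hᵀ * (Γ * (V * (N * (Vᵀ * (M * (P * D)))))))))).trace
      = (N * (Vᵀ * (D * (Dᵀ * (P * (M * (V * (N * (Vᵀ * (Γ * H)))))))))).trace := by
    rw [← Matrix.trace_transpose (Dᵀ * (V * (N * (Hᵀ * (Γ * (V * (N * (Vᵀ * (M * (P * D))))))))))]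
    rw [show (Dᵀ * (V * (N * (Hᵀ * (Γ * (V * (N * (Vᵀ * (M * (P * D))))))))))ᵀ
        = (Dᵀ * (P * (M * (V * (N * (Vᵀ * (Γ * H))))))) * (N * (Vᵀ * D)) from by
      simp only [Matrix.transpose_mul, Matrix.transpose_transpose, hPt, hNt, hM, hGt,
        Matrix.mul_assoc]]
    rw [Matrix.trace_mul_comm]
    simp only [Matrix.mul_assoc]
  rw [cL1, cL2, cL3, cL4, cL5, cL6, cL7, cL8]
  simp only [Matrix.trace_smul, Matrix.trace_sub, smul_eq_mul]
  ring



/-- The `Γ`-orthogonal projection matrix `P_V = Γ⁻¹ − V(VᵀΓV)⁻¹Vᵀ`. -/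
noncomputable def Pmat {d s : ℕ} (Γ : Matrix (Fin d) (Fin d) ℝ)
    (V : Matrix (Fin d) (Fin s) ℝ) : Matrix (Fin d) (Fin d) ℝ :=
  Γ⁻¹ - V * (Vᵀ * Γ * V)⁻¹ * Vᵀ

/-- The symmetric part `Sym(W) = (W + Wᵀ)/2`. -/
noncomputable def symPart {d : ℕ} (W : Matrix (Fin d) (Fin d) ℝ) : Matrix (Fin d) (Fin d) ℝ :=
  (1 / 2 : ℝ) • (W + Wᵀ)

/-- the function `F(V) = Tr[Dᵀ P_V M P_V D]` is Fréchet differentiable at every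
`V` with `VᵀΓV` invertible, and its Euclidean gradient is
`G = −4 Γ P_V Sym(D Dᵀ P_V M) V (VᵀΓV)⁻¹`, i.e. `D_V F[H] = Tr[Gᵀ H]` for all `H`. -/
theorem stmt13 {d k s : ℕ} (Γ : Matrix (Fin d) (Fin d) ℝ) (hΓ : Γ.PosDef)
    (D : Matrix (Fin d) (Fin k) ℝ) (M : Matrix (Fin d) (Fin d) ℝ) (hM : Mᵀ = M)
    (V : Matrix (Fin d) (Fin s) ℝ) (hV : IsUnit (Vᵀ * Γ * V)) :
    ∃ L : Matrix (Fin d) (Fin s) ℝ →L[ℝ] ℝ,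
      HasFDerivAt (fun W : Matrix (Fin d) (Fin s) ℝ =>
        Matrix.trace (Dᵀ * Pmat Γ W * M * Pmat Γ W * D)) L V ∧
      ∀ H : Matrix (Fin d) (Fin s) ℝ,
        L H = Matrix.trace
          (((-4 : ℝ) • (Γ * Pmat Γ V * symPart (D * Dᵀ * Pmat Γ V * M) * V *
            (Vᵀ * Γ * V)⁻¹))ᵀ * H) := by
  have hId : HasFDerivAt (fun W : Mat d s => W) (ContinuousLinearMap.id ℝ (Mat d s)) V :=
    hasFDerivAt_id V
  have hT := (clm (fun H : Mat d s => Hᵀ) (fun _ _ => Matrix.transpose_add _ _)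
        (fun _ _ => Matrix.transpose_smul _ _)).hasFDerivAt (x := V)
  have h1 := hT.matMul (hasFDerivAt_const Γ V)
  have hA := h1.matMul hId
  have hNi := hasFDerivAt_matrix_inv (Vᵀ * Γ * V) hV
  have hN := HasFDerivAt.comp (g := fun B : Mat s s => B⁻¹)
    (f := fun W : Mat d s => (clm (fun H : Mat d s => Hᵀ) (fun _ _ => Matrix.transpose_add _ _)
        (fun _ _ => Matrix.transpose_smul _ _)) W * Γ * W) V hNi hA
  have hVN := hId.matMul hN
  have hVNVt := hVN.matMul hT
  have hP := (hasFDerivAt_const Γ⁻¹ V).sub hVNVt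
  have hF1 := (hasFDerivAt_const Dᵀ V).matMul hP
  have hF2 := hF1.matMul (hasFDerivAt_const M V)
  have hF3 := hF2.matMul hP
  have hF4 := hF3.matMul (hasFDerivAt_const D V)
  have htr := (clm (fun X : Mat k k => Matrix.trace X) (fun _ _ => Matrix.trace_add _ _)
        (fun _ _ => Matrix.trace_smul _ _)).hasFDerivAt
    (x := Dᵀ * Pmat Γ V * M * Pmat Γ V * D)
  have hFinal := htr.comp V hF4
  refine ⟨_, hFinal, fun H => ?_⟩
  set_option maxRecDepth 100000 in
  refine Eq.trans (b := Matrix.trace (Dᵀ * Pmat Γ V * M * Pmat Γ V * (0 : Mat d k) + (Dᵀ * Pmat Γ V * M * (0 - (V * (Vᵀ * Γ * V)⁻¹ * Hᵀ + (V * -((Vᵀ * Γ * V)⁻¹ * (Vᵀ * Γ * H + (Vᵀ * (0 : Mat d d) + Hᵀ * Γ) * V) * (Vᵀ * Γ * V)⁻¹) + H * (Vᵀ * Γ * V)⁻¹) * Vᵀ)) + (Dᵀ * Pmat Γ V * (0 : Mat d d) + (Dᵀ * (0 - (V * (Vᵀ * Γ * V)⁻¹ * Hᵀ + (V * -((Vᵀ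 * Γ * V)⁻¹ * (Vᵀ * Γ * H + (Vᵀ * (0 : Mat d d) + Hᵀ * Γ) * V) * (Vᵀ * Γ * V)⁻¹) + H * (Vᵀ * Γ * V)⁻¹) * Vᵀ)) + (0 : Mat k d) * Pmat Γ V) * M) * Pmat Γ V) * D)) rfl ?_
  simp only [Matrix.zero_mul, Matrix.mul_zero, zero_add, add_zero, zero_sub]
  simp only [Pmat, symPart]
  have hGt : Γᵀ = Γ := by
    rw [← Matrix.conjTranspose_eq_transpose_of_trivial]; exact hΓ.1.eq
  have hΓdet : IsUnit Γ.det := (Matrix.isUnit_iff_isUnit_det Γ).mp hΓ.isUnit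
  exact key Γ M D V H hGt hM hΓdet hV
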